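/- Let E be a relation on Fin n and define k* as the maximum, over families of vertex-disjoint directed cycles of the digraph E, of the total number of vertices covered (equivalently, the maximum size of a subset T ⊆ Fin n admitting a permutation σ of T with E i (σ i) for all i ∈ T). With edge weights 3 on dynamics edges, 1 on (inl i, inr i) and (inr i, inl i), and 2 on (inr i, inr i), the maximum total weight of a perfect matching of H(E) equals 2n + 3k*. -/

import Mathlib

def IsBMatching {α β : Type*} (Adj : α → β → Prop) (M : Finset (α × β)) : Prop :=
  (∀ p ∈ M, Adj p.1 p.2) ∧
  (∀ p ∈ M, ∀ q ∈ M, p.1 = q.1 → p = q) ∧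
  (∀ p ∈ M, ∀ q ∈ M, p.2 = q.2 → p = q)

/-- Edge relation of the bipartite graph `H(E)` (the graph `B(D)` of the algorithm):
dynamics edges `(inl i, inl j)` iff `E i j`, plus `(inl i, inr i)`, `(inr i, inl i)`,
`(inr i, inr i)` for every `i`. -/
def HAdj {n : ℕ} (E : Fin n → Fin n → Prop) :
    (Fin n ⊕ Fin n) → (Fin n ⊕ Fin n) → Prop := fun a b =>
  match a, b with
  | Sum.inl i, Sum.inl j => E i j
  | Sum.inl i, Sum.inr j => i = j
  | Sum.inr i, Sum.inl j => i = j
  | Sum.inr i, Sum.inr j => i = j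

/-- A perfect matching of `H(E)`: a matching covering every left and right vertex. -/
def IsPerfectMatchingH {n : ℕ} (E : Fin n → Fin n → Prop)
    (M : Finset ((Fin n ⊕ Fin n) × (Fin n ⊕ Fin n))) : Prop :=
  IsBMatching (HAdj E) M ∧
  (∀ v : Fin n ⊕ Fin n, ∃ p ∈ M, p.1 = v) ∧
  (∀ v : Fin n ⊕ Fin n, ∃ p ∈ M, p.2 = v)

def hWeight {n : ℕ} (p : (Fin n ⊕ Fin n) × (Fin n ⊕ Fin n)) : ℕ :=
  match p with
  | (Sum.inl _, Sum.inl _) => 3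
  | (Sum.inl _, Sum.inr _) => 1
  | (Sum.inr _, Sum.inl _) => 1
  | (Sum.inr _, Sum.inr _) => 2

/-- `T` is covered by a family of vertex-disjoint directed cycles of `E`, encoded as a
permutation `σ` mapping `T` into itself with `E i (σ i)` for all `i ∈ T`. -/
def IsCycleFamilyOn {n : ℕ} (E : Fin n → Fin n → Prop)
    (T : Finset (Fin n)) (σ : Equiv.Perm (Fin n)) : Prop :=
  (∀ i ∈ T, σ i ∈ T) ∧ (∀ i ∈ T, E i (σ i))

section AuxStmt6

variable {n : ℕ}

lemma sum_pairing (m : (Fin n ⊕ Fin n) → (Fin n ⊕ Fin n)) :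
    ∑ p ∈ Finset.univ.image (fun v => (v, m v)), hWeight p
      = ∑ v : Fin n ⊕ Fin n, hWeight (v, m v) := by
  apply Finset.sum_image
  intro a _ b _ h
  exact congrArg Prod.fst h

lemma weight_total (m : (Fin n ⊕ Fin n) → (Fin n ⊕ Fin n)) (T : Finset (Fin n))
    (h1 : ∀ i ∈ T, ∃ j, m (Sum.inl i) = Sum.inl j)
    (h2 : ∀ i ∉ T, m (Sum.inl i) = Sum.inr i)
    (h3 : ∀ i ∈ T, m (Sum.inr i) = Sum.inr i)
    (h4 : ∀ i ∉ T, m (Sum.inr i) = Sum.inl i) :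
    ∑ v : Fin n ⊕ Fin n, hWeight (v, m v) = 2 * n + 3 * T.card := by
  rw [Fintype.sum_sum_type]
  have hA : ∀ i : Fin n, hWeight (Sum.inl i, m (Sum.inl i))
      = 1 + if i ∈ T then 2 else 0 := by
    intro i; by_cases hi : i ∈ T
    · obtain ⟨j, hj⟩ := h1 i hi; rw [hj]; simp [hWeight, hi]
    · rw [h2 i hi]; simp [hWeight, hi]
  have hB : ∀ i : Fin n, hWeight (Sum.inr i, m (Sum.inr i))
      = 1 + if i ∈ T then 1 else 0 := by
    intro i; by_cases hi : i ∈ T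
    · rw [h3 i hi]; simp [hWeight, hi]
    · rw [h4 i hi]; simp [hWeight, hi]
  simp only [hA, hB, Finset.sum_add_distrib, Finset.sum_const, Finset.sum_ite_mem,
    Finset.univ_inter, Finset.card_univ, Fintype.card_fin, smul_eq_mul]
  ring

lemma isPM_of (E : Fin n → Fin n → Prop) (m : (Fin n ⊕ Fin n) → (Fin n ⊕ Fin n))
    (hinj : Function.Injective m) (hadj : ∀ v, HAdj E v (m v)) :
    IsPerfectMatchingH E (Finset.univ.image (fun v => (v, m v))) := by
  refine ⟨⟨?_, ?_, ?_⟩, ?_, ?_⟩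
  · intro p hp
    obtain ⟨v, -, hv⟩ := Finset.mem_image.mp hp
    rw [← hv]; exact hadj v
  · intro p hp q hq h
    obtain ⟨v, -, hv⟩ := Finset.mem_image.mp hp
    obtain ⟨w, -, hw⟩ := Finset.mem_image.mp hq
    subst hv; subst hw
    simp only at h
    subst h; rfl
  · intro p hp q hq h
    obtain ⟨v, -, hv⟩ := Finset.mem_image.mp hp
    obtain ⟨w, -, hw⟩ := Finset.mem_image.mp hq
    subst hv; subst hw
    simp only at h
    rw [hinj h]
  · intro v
    exact ⟨(v, m v), Finset.mem_image_of_mem _ (Finset.mem_univ v), rfl⟩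
  · intro v
    obtain ⟨u, hu⟩ := (Finite.injective_iff_surjective.mp hinj) v
    exact ⟨(u, m u), Finset.mem_image_of_mem _ (Finset.mem_univ u), hu⟩

end AuxStmt6

theorem stmt6 {n : ℕ} (E : Fin n → Fin n → Prop) (kstar : ℕ)
    (hmax : (∃ T : Finset (Fin n), ∃ σ : Equiv.Perm (Fin n),
        IsCycleFamilyOn E T σ ∧ T.card = kstar) ∧
      (∀ T : Finset (Fin n), ∀ σ : Equiv.Perm (Fin n),
        IsCycleFamilyOn E T σ → T.card ≤ kstar)) :
    (∃ M : Finset ((Fin n ⊕ Fin n) × (Fin n ⊕ Fin n)),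
      IsPerfectMatchingH E M ∧ ∑ p ∈ M, hWeight p = 2 * n + 3 * kstar) ∧
    (∀ M : Finset ((Fin n ⊕ Fin n) × (Fin n ⊕ Fin n)),
      IsPerfectMatchingH E M → ∑ p ∈ M, hWeight p ≤ 2 * n + 3 * kstar) := by
  constructor
  · -- existence
    obtain ⟨T, σ, ⟨hTmap, hTE⟩, hTcard⟩ := hmax.1
    have himg : T.image σ = T := by
      apply Finset.eq_of_subset_of_card_le
      · intro x hx
        obtain ⟨i, hi, rfl⟩ := Finset.mem_image.mp hx
        exact hTmap i hi
      · rw [Finset.card_image_of_injective _ σ.injective]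
    have hback : ∀ i, σ i ∈ T → i ∈ T := by
      intro i hi
      rw [← himg] at hi
      obtain ⟨j, hj, hji⟩ := Finset.mem_image.mp hi
      rwa [← σ.injective hji]
    set m : (Fin n ⊕ Fin n) → (Fin n ⊕ Fin n) :=
      Sum.elim (fun i => if i ∈ T then Sum.inl (σ i) else Sum.inr i)
        (fun i => if i ∈ T then Sum.inr i else Sum.inl i) with hm
    have hinj : Function.Injective m := by
      intro a b h
      rcases a with i | i <;> rcases b with j | j <;>
        by_cases hi : i ∈ T <;> by_cases hj : j ∈ T <;>
        simp only [hm, Sum.elim_inl, Sum.elim_inr, hi, hj, if_true, if_false,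
          Sum.inl.injEq, Sum.inr.injEq, reduceCtorEq] at h
      · rw [σ.injective h]
      · rw [h]
      · exact absurd (show j ∈ T by rw [← h]; exact hTmap i hi) hj
      · exact absurd (show i ∈ T by rw [h]; exact hj) hi
      · exact absurd (show j ∈ T by rw [← h]; exact hi) hj
      · exact absurd (show i ∈ T by rw [h]; exact hTmap j hj) hi
      · rw [h]
      · rw [h]
    have hadj : ∀ v, HAdj E v (m v) := by
      intro v
      rcases v with i | i <;> by_cases hi : i ∈ T <;>
        simp only [hm, Sum.elim_inl, Sum.elim_inr, hi, if_true, if_false]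
      · exact hTE i hi
      · exact rfl
      · exact rfl
      · exact rfl
    refine ⟨_, isPM_of E m hinj hadj, ?_⟩
    rw [sum_pairing, weight_total m T ?_ ?_ ?_ ?_, hTcard]
    · intro i hi; exact ⟨σ i, by simp [hm, hi]⟩
    · intro i hi; simp [hm, hi]
    · intro i hi; simp [hm, hi]
    · intro i hi; simp [hm, hi]
  · -- upper bound
    intro M hM
    obtain ⟨⟨hadjM, hfst, hsnd⟩, hcov1, hcov2⟩ := hM
    have hex : ∀ v, ∃ w, (v, w) ∈ M := by
      intro v
      obtain ⟨p, hp, hp1⟩ := hcov1 v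
      exact ⟨p.2, by rwa [← hp1]⟩
    choose m hmM using hex
    have hinj : Function.Injective m := by
      intro a b h
      have := hsnd (a, m a) (hmM a) (b, m b) (hmM b) h
      exact congrArg Prod.fst this
    have hsurj : Function.Surjective m := Finite.injective_iff_surjective.mp hinj
    have hMeq : M = Finset.univ.image (fun v => (v, m v)) := by
      ext p
      constructor
      · intro hp
        have := hfst p hp (p.1, m p.1) (hmM p.1) rfl
        rw [this]
        exact Finset.mem_image_of_mem _ (Finset.mem_univ p.1)
      · intro hp
        obtain ⟨v, -, hv⟩ := Finset.mem_image.mp hp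
        rw [← hv]; exact hmM v
    have hadjm : ∀ v, HAdj E v (m v) := fun v => hadjM (v, m v) (hmM v)
    set T : Finset (Fin n) :=
      Finset.univ.filter (fun i => (m (Sum.inl i)).isLeft) with hT
    have hmemT : ∀ i, i ∈ T ↔ (m (Sum.inl i)).isLeft := by
      intro i; simp [hT]
    have h2 : ∀ i ∉ T, m (Sum.inl i) = Sum.inr i := by
      intro i hi
      rcases hj : m (Sum.inl i) with j | j
      · exact absurd ((hmemT i).mpr (by rw [hj]; rfl)) hi
      · have := hadjm (Sum.inl i)
        rw [hj] at this
        exact congrArg Sum.inr (show i = j from this).symm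
    have h1 : ∀ i ∈ T, ∃ j, m (Sum.inl i) = Sum.inl j := by
      intro i hi
      rcases hj : m (Sum.inl i) with j | j
      · exact ⟨j, rfl⟩

      · have hL := (hmemT i).mp hi
        rw [hj] at hL
        simp at hL
    have h4 : ∀ i ∉ T, m (Sum.inr i) = Sum.inl i := by
      intro i hi
      rcases hj : m (Sum.inr i) with j | j
      · have := hadjm (Sum.inr i); rw [hj] at this
        exact congrArg Sum.inl (show i = j from this).symm
      · have := hadjm (Sum.inr i); rw [hj] at this
        have heq : m (Sum.inl i) = m (Sum.inr i) := by
          rw [h2 i hi, hj]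
          exact congrArg Sum.inr (show i = j from this)
        exact absurd (hinj heq) (by simp)
    have h3 : ∀ i ∈ T, m (Sum.inr i) = Sum.inr i := by
      intro i hi
      obtain ⟨u, hu⟩ := hsurj (Sum.inr i)
      have hadju := hadjm u
      rw [hu] at hadju
      rcases u with a | a
      · have ha : a = i := hadju
        have hL := (hmemT i).mp hi
        rw [← ha, hu] at hL
        simp at hL
      · have ha : a = i := hadju
        rw [ha] at hu
        exact hu
    have hsum : ∑ p ∈ M, hWeight p = 2 * n + 3 * T.card := by
      rw [hMeq, sum_pairing, weight_total m T h1 h2 h3 h4]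
    set g : Fin n → Fin n := fun i => (m (Sum.inl i)).elim id (fun _ => i) with hg
    have hgT : ∀ i ∈ T, m (Sum.inl i) = Sum.inl (g i) := by
      intro i hi
      obtain ⟨j, hj⟩ := h1 i hi
      simp [hg, hj]
    have hgout : ∀ i ∉ T, g i = i := by
      intro i hi; simp [hg, h2 i hi]
    have hgmem : ∀ i ∈ T, g i ∈ T := by
      intro i hi
      by_contra hgi
      have h4' := h4 (g i) hgi
      have heq : m (Sum.inl i) = m (Sum.inr (g i)) := by rw [hgT i hi, h4']
      exact absurd (hinj heq) (by simp)
    have hginj : Function.Injective g := by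
      intro a b h
      by_cases ha : a ∈ T <;> by_cases hb : b ∈ T
      · have heq : m (Sum.inl a) = m (Sum.inl b) := by rw [hgT a ha, hgT b hb, h]
        exact Sum.inl.inj (hinj heq)
      · rw [hgout b hb] at h
        exact absurd (h ▸ hgmem a ha) hb
      · rw [hgout a ha] at h
        exact absurd (h ▸ hgmem b hb) ha
      · rw [← hgout a ha, ← hgout b hb, h]
    have hcf : IsCycleFamilyOn E T (Equiv.ofBijective g
        (Finite.injective_iff_bijective.mp hginj)) := by
      constructor
      · intro i hi
        simpa [Equiv.ofBijective_apply] using hgmem i hi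
      · intro i hi
        have h := hadjm (Sum.inl i)
        rw [hgT i hi] at h
        simpa [Equiv.ofBijective_apply] using (show E i (g i) from h)
    have hle := hmax.2 T _ hcf
    omega
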